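/- Let θ > 0 and λ > 0. Define M : ℝ → ℝ by M(y) = 1 for y ≤ 0 and M(x) = (θ/(θ+λ))^⌈x⌉ for x > 0 (where ⌈x⌉ is the ceiling of x). Then M satisfies the differential-difference equation θ·(M(x−1) − M(x)) = λ·M(x) for every x > 0, and M(x) → 0 as x → +∞. -/

import Mathlib

/-- For the Poisson case, `M(y) = 1` for `y ≤ 0` and `M(x) = (θ/(θ+λ))^⌈x⌉` for `x > 0`
satisfies `θ(M(x-1) - M(x)) = λ M(x)` for all `x > 0`, and `M(x) → 0` as `x → +∞`. -/
theorem stmt_0 (θ lam : ℝ) (hθ : 0 < θ) (hlam : 0 < lam)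
    (M : ℝ → ℝ)
    (hM0 : ∀ y : ℝ, y ≤ 0 → M y = 1)
    (hMpos : ∀ x : ℝ, 0 < x → M x = (θ / (θ + lam)) ^ (⌈x⌉ : ℤ)) :
    (∀ x : ℝ, 0 < x → θ * (M (x - 1) - M x) = lam * M x) ∧
      Filter.Tendsto M Filter.atTop (nhds 0) := by
  have hsum : 0 < θ + lam := by linarith
  set r : ℝ := θ / (θ + lam) with hr
  have hr0 : 0 < r := div_pos hθ hsum
  have hr1 : r < 1 := by
    rw [hr, div_lt_one hsum]; linarith
  constructor
  · intro x hx
    rcases le_or_gt x 1 with h1 | h1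
    · have hc : ⌈x⌉ = 1 := by
        rw [Int.ceil_eq_iff]
        push_cast
        constructor <;> linarith
      rw [hM0 (x - 1) (by linarith), hMpos x hx, hc]
      simp only [zpow_one, hr]
      field_simp
      ring
    · have hc1 : (0 : ℝ) < x - 1 := by linarith
      have hc : ⌈x - 1⌉ = ⌈x⌉ - 1 := by
        rw [Int.ceil_sub_one]
      rw [hMpos (x - 1) hc1, hMpos x hx, hc]
      have hrne : r ≠ 0 := ne_of_gt hr0
      rw [zpow_sub_one₀ hrne]
      have : θ * (r ^ ⌈x⌉ * r⁻¹ - r ^ ⌈x⌉) = r ^ ⌈x⌉ * (θ * (r⁻¹ - 1)) := by ring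
      rw [this]
      have hkey : θ * (r⁻¹ - 1) = lam := by
        rw [hr]
        field_simp
        ring
      rw [hkey]; ring
  · have hrpow : Filter.Tendsto (fun x : ℝ => r ^ x) Filter.atTop (nhds 0) :=
      tendsto_rpow_atTop_of_base_lt_one r (by linarith) hr1
    apply tendsto_of_tendsto_of_tendsto_of_le_of_le' tendsto_const_nhds hrpow
    · filter_upwards [Filter.eventually_gt_atTop (0 : ℝ)] with x hx
      rw [hMpos x hx]
      positivity
    · filter_upwards [Filter.eventually_gt_atTop (0 : ℝ)] with x hx
      rw [hMpos x hx, ← Real.rpow_intCast r ⌈x⌉]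
      exact Real.rpow_le_rpow_of_exponent_ge hr0 hr1.le (Int.le_ceil x)
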